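/- If g lies in the k-th derived group F^{(k)} of the free group F(ℛ[t, t⁻¹]) = ⟨M₁, M₂T⟩ for k ≥ 2, and g is written as a polynomial g = M_g + (t-1)A₁ + (t-1)²A₂ + ⋯ in (t-1) with matrix coefficients over ℛ, then M_g = I and Aᵢ = 0 for i < 2^{k-2}, and Aᵢ ∈ Σ^{2^{k-2}} (entrywise) for all i ≥ 2^{k-2}. -/

import Mathlib

open Matrix Finset

noncomputable section

/-- The Laurent polynomial ring `ℛ = ℤ[x, x⁻¹, y, y⁻¹]`, realized as the group
algebra of `ℤ × ℤ` over `ℤ`. -/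
abbrev R2 : Type := AddMonoidAlgebra ℤ (ℤ × ℤ)

/-- The positive units `x^i y^j` of `ℛ`, as a homomorphism from `ℤ × ℤ`. -/
def U : Multiplicative (ℤ × ℤ) →* R2ˣ :=
  (Units.map (AddMonoidAlgebra.of ℤ (ℤ × ℤ))).comp toUnits.toMonoidHom

/-- `x` as a unit of `ℛ`. -/
def xu : R2ˣ := U (Multiplicative.ofAdd (1, 0))
/-- `y` as a unit of `ℛ`. -/
def yu : R2ˣ := U (Multiplicative.ofAdd (0, 1))
/-- `x ∈ ℛ`. -/
def Xr : R2 := xu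
/-- `y ∈ ℛ`. -/
def Yr : R2 := yu

/-- The augmentation map `ℛ → ℤ`, `x, y ↦ 1`. -/
def aug : R2 →+* ℤ := ((AddMonoidAlgebra.lift ℤ ℤ (ℤ × ℤ)) 1).toRingHom

/-- The augmentation ideal `Σ` of `ℛ`. -/
def Saug : Ideal R2 := RingHom.ker aug

/-- The `n`-cyclotomic ideal `𝒥(n)` of `ℛ`, generated by `1 + u + ⋯ + u^(n-1)` for
positive units `u`. -/
def Cyc (n : ℕ) : Ideal R2 :=
  Ideal.span {r | ∃ m : Multiplicative (ℤ × ℤ), r = ∑ i ∈ Finset.range n, ((U m : R2)) ^ i}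

/-- The matrix `M₁`. -/
def M1 : Matrix (Fin 2) (Fin 2) R2 := !![1, 1 - Yr; 0, Xr]
/-- The matrix `M₂`. -/
def M2 : Matrix (Fin 2) (Fin 2) R2 := !![Yr, 0; 1 - Xr, 1]

/-- The matrix `[λᵢ v]` with rows `λᵢ • (1-x, 1-y)`. -/
def Nmat (a b : R2) : Matrix (Fin 2) (Fin 2) R2 :=
  !![a * (1 - Xr), a * (1 - Yr); b * (1 - Xr), b * (1 - Yr)]

/-- The row vector `v = (1-x, 1-y)`. -/
def vv : Fin 2 → R2 := ![1 - Xr, 1 - Yr]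

end

/-- The ring `ℛ[t, t⁻¹]`, as Laurent polynomials over `ℛ`. -/
abbrev RT : Type := LaurentPolynomial R2

noncomputable section

/-- `x ∈ ℛ[t, t⁻¹]`. -/
def Xt : RT := LaurentPolynomial.C Xr
/-- `y ∈ ℛ[t, t⁻¹]`. -/
def Yt : RT := LaurentPolynomial.C Yr
/-- `t ∈ ℛ[t, t⁻¹]`. -/
def tL : RT := LaurentPolynomial.T 1

/-- The matrix `M₁` over `ℛ[t, t⁻¹]`. -/
def M1T : Matrix (Fin 2) (Fin 2) RT := !![1, 1 - Yt; 0, Xt]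
/-- The matrix `M₂` over `ℛ[t, t⁻¹]`. -/
def M2T : Matrix (Fin 2) (Fin 2) RT := !![Yt, 0; 1 - Xt, 1]
/-- The matrix `T`. -/
def Tm : Matrix (Fin 2) (Fin 2) RT := !![tL, 0; 1 - tL, 1]

/-- `t = 1 + (t - 1)` as a unit of the power series ring `ℛ[[t-1]]`
(whose variable `X` plays the role of `t - 1`). -/
def uPS : (PowerSeries R2)ˣ :=
  ((PowerSeries.isUnit_iff_constantCoeff (φ := 1 + PowerSeries.X)).mpr (by simp)).unit

/-- The power series expansion `ℛ[t, t⁻¹] → ℛ[[t-1]]`, the ring homomorphism sending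
`t` to `1 + X` (where `X` stands for `t - 1`); the coefficient of `X^i` in the image of
`f` is the coefficient `Aᵢ` of `(t-1)^i` in the expansion of `f` in powers of `t - 1`. -/
def phi : RT →+* PowerSeries R2 :=
  ((AddMonoidAlgebra.lift R2 (PowerSeries R2) ℤ)
    ((Units.coeHom (PowerSeries R2)).comp (zpowersHom (PowerSeries R2)ˣ uPS))).toRingHom

/-- The derived series of a subgroup `H` of an ambient group, as subgroups of the
ambient group: `derivedSub H 0 = H`, `derivedSub H (k+1) = [derivedSub H k, derivedSub H k]`. -/
def derivedSub {G : Type*} [Group G] (H : Subgroup G) : ℕ → Subgroup G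
  | 0 => H
  | k + 1 => ⁅derivedSub H k, derivedSub H k⁆

end


noncomputable section

open scoped commutatorElement

lemma Xr_single : Xr = AddMonoidAlgebra.single ((1:ℤ),(0:ℤ)) (1:ℤ) := by
  simp [Xr, xu, U, AddMonoidAlgebra.of_apply]
lemma Yr_single : Yr = AddMonoidAlgebra.single ((0:ℤ),(1:ℤ)) (1:ℤ) := by
  simp [Yr, yu, U, AddMonoidAlgebra.of_apply]

lemma one_sub_Xr_ne : (1 : R2) - Xr ≠ 0 := by
  rw [sub_ne_zero]
  intro h
  rw [AddMonoidAlgebra.one_def, Xr_single] at h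
  rcases AddMonoidAlgebra.single_inj.mp h with ⟨h1, -⟩ | ⟨h1, -⟩
  · exact absurd (congrArg Prod.fst h1) (by norm_num)
  · exact one_ne_zero h1

lemma one_sub_Yr_ne : (1 : R2) - Yr ≠ 0 := by
  rw [sub_ne_zero]
  intro h
  rw [AddMonoidAlgebra.one_def, Yr_single] at h
  rcases AddMonoidAlgebra.single_inj.mp h with ⟨h1, -⟩ | ⟨h1, -⟩
  · exact absurd (congrArg Prod.snd h1) (by norm_num)
  · exact one_ne_zero h1

lemma aug_Xr : aug Xr = 1 := by
  rw [Xr_single]; simp [aug, AddMonoidAlgebra.lift_single]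
lemma aug_Yr : aug Yr = 1 := by
  rw [Yr_single]; simp [aug, AddMonoidAlgebra.lift_single]

lemma LC_single (r : R2) : LaurentPolynomial.C r = AddMonoidAlgebra.single (0:ℤ) r := by
  rfl

lemma phi_C (r : R2) : phi (LaurentPolynomial.C r) = PowerSeries.C r := by
  show ((AddMonoidAlgebra.lift R2 (PowerSeries R2) ℤ)
      ((Units.coeHom (PowerSeries R2)).comp (zpowersHom (PowerSeries R2)ˣ uPS)))
      (LaurentPolynomial.C r) = PowerSeries.C r
  rw [LC_single, AddMonoidAlgebra.lift_single]
  simp only [ofAdd_zero, _root_.map_one]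
  ext n
  rw [PowerSeries.coeff_smul]
  simp [PowerSeries.coeff_one, PowerSeries.coeff_C, smul_eq_mul]

lemma uPS_spec : (uPS : PowerSeries R2) = 1 + PowerSeries.X := IsUnit.unit_spec _

lemma T_single (n : ℤ) : (LaurentPolynomial.T n : RT) = AddMonoidAlgebra.single n 1 := rfl

lemma phi_T : phi tL = 1 + PowerSeries.X := by
  show ((AddMonoidAlgebra.lift R2 (PowerSeries R2) ℤ)
      ((Units.coeHom (PowerSeries R2)).comp (zpowersHom (PowerSeries R2)ˣ uPS)))
      tL = 1 + PowerSeries.X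
  rw [tL, T_single, AddMonoidAlgebra.lift_single]
  simp only [one_smul, MonoidHom.comp_apply, zpowersHom_apply, toAdd_ofAdd, zpow_one,
    Units.coeHom_apply]
  exact uPS_spec

abbrev PS : Type := PowerSeries R2
abbrev MatRT : Type := Matrix (Fin 2) (Fin 2) RT
abbrev MatPS : Type := Matrix (Fin 2) (Fin 2) PS

def Phi : MatRT →+* MatPS := phi.mapMatrix

lemma Phi_apply (M : MatRT) (a b : Fin 2) : Phi M a b = phi (M a b) := rfl

lemma mem_mul_right (J : Ideal PS) (M N : MatPS) (h : ∀ a b, M a b ∈ J) (a b : Fin 2) :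
    (M * N) a b ∈ J := by
  rw [Matrix.mul_apply]
  exact sum_mem fun c _ => J.mul_mem_right _ (h a c)

lemma mem_mul_left (J : Ideal PS) (M N : MatPS) (h : ∀ a b, N a b ∈ J) (a b : Fin 2) :
    (M * N) a b ∈ J := by
  rw [Matrix.mul_apply]
  exact sum_mem fun c _ => J.mul_mem_left _ (h c b)

/-- The subgroup of units `g` with `Φ(g) ≡ 1 mod J` entrywise. -/
def HJ (J : Ideal PS) : Subgroup MatRTˣ where
  carrier := {g | ∀ a b, (Phi (g : MatRT) - 1) a b ∈ J}
  one_mem' := by intro a b; simp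
  mul_mem' := by
    intro g h hg hh a b
    have key : Phi ((↑(g * h) : MatRT)) - 1 =
        (Phi ↑g - 1) * (Phi ↑h - 1) + ((Phi ↑g - 1) + (Phi ↑h - 1)) := by
      rw [Units.val_mul, _root_.map_mul]; noncomm_ring
    rw [key]
    simp only [Matrix.add_apply]
    exact add_mem (mem_mul_right J _ _ hg a b) (add_mem (hg a b) (hh a b))
  inv_mem' := by
    intro g hg a b
    have h1 : Phi (↑g⁻¹ : MatRT) * Phi (↑g : MatRT) = 1 := by
      rw [← _root_.map_mul, Units.inv_mul, _root_.map_one]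
    have key : Phi (↑g⁻¹ : MatRT) - 1 = -(Phi (↑g⁻¹ : MatRT) * (Phi ↑g - 1)) := by
      rw [mul_sub, h1, mul_one]; noncomm_ring
    rw [key]
    simp only [Matrix.neg_apply]
    exact neg_mem (mem_mul_left J _ _ hg a b)

lemma mem_HJ {J : Ideal PS} {g : MatRTˣ} :
    g ∈ HJ J ↔ ∀ a b, (Phi (g : MatRT) - 1) a b ∈ J := Iff.rfl

lemma HJ_mono {J J' : Ideal PS} (h : J ≤ J') : HJ J ≤ HJ J' :=
  fun g hg a b => h (hg a b)

lemma commutator_HJ_le (J J' : Ideal PS) : ⁅HJ J, HJ J'⁆ ≤ HJ (J * J') := by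
  rw [Subgroup.commutator_le]
  intro g hg h hh
  rw [mem_HJ]
  intro a b
  set A : MatPS := Phi ↑g
  set B : MatPS := Phi ↑h
  set A' : MatPS := Phi (↑g⁻¹ : MatRT)
  set B' : MatPS := Phi (↑h⁻¹ : MatRT)
  have hAA' : A * A' = 1 := by rw [← _root_.map_mul, Units.mul_inv, _root_.map_one]
  have hBB' : B * B' = 1 := by rw [← _root_.map_mul, Units.mul_inv, _root_.map_one]
  have key : Phi (↑⁅g, h⁆ : MatRT) - 1 =
      ((A - 1) * (B - 1) - (B - 1) * (A - 1)) * (A' * B') := by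
    have h0 : Phi (↑⁅g, h⁆ : MatRT) = A * B * A' * B' := by
      rw [commutatorElement_def]
      simp only [Units.val_mul, _root_.map_mul]; rfl
    rw [h0]
    have h2 : ((A - 1) * (B - 1) - (B - 1) * (A - 1)) * (A' * B')
        = A * B * (A' * B') - B * (A * A') * B' := by noncomm_ring
    rw [h2, hAA', mul_one, hBB', ← mul_assoc]
  rw [key]
  refine mem_mul_right _ _ _ (fun a b => ?_) a b
  simp only [Matrix.sub_apply]
  refine sub_mem ?_ ?_
  · rw [Matrix.mul_apply]
    exact sum_mem fun c _ => Ideal.mul_mem_mul (hg a c) (hh c b)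
  · rw [Matrix.mul_apply, mul_comm J J']
    exact sum_mem fun c _ => Ideal.mul_mem_mul (hh a c) (hg c b)

/-- The ideal of power series vanishing below degree `N` with all coefficients in `Σ^N`. -/
def JN (N : ℕ) : Ideal PS where
  carrier := {f | (∀ i < N, PowerSeries.coeff (R := R2) i f = 0) ∧
      ∀ i, PowerSeries.coeff (R := R2) i f ∈ Saug ^ N}
  zero_mem' := ⟨fun i _ => by simp, fun i => by simp⟩
  add_mem' := by
    intro f g hf hg
    refine ⟨fun i hi => by rw [map_add, hf.1 i hi, hg.1 i hi, add_zero], fun i => ?_⟩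
    rw [map_add]; exact add_mem (hf.2 i) (hg.2 i)
  smul_mem' := by
    intro r f hf
    rw [smul_eq_mul]
    constructor
    · intro i hi
      rw [PowerSeries.coeff_mul]
      refine Finset.sum_eq_zero fun p hp => ?_
      rw [hf.1 p.2 (lt_of_le_of_lt ?_ hi), mul_zero]
      have := Finset.HasAntidiagonal.mem_antidiagonal.mp hp
      omega
    · intro i
      rw [PowerSeries.coeff_mul]
      exact sum_mem fun p _ => Ideal.mul_mem_left _ _ (hf.2 p.2)

lemma mem_JN {N : ℕ} {f : PS} : f ∈ JN N ↔ (∀ i < N, PowerSeries.coeff (R := R2) i f = 0) ∧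
    ∀ i, PowerSeries.coeff (R := R2) i f ∈ Saug ^ N := Iff.rfl

lemma JN_mul_le (N M : ℕ) : JN N * JN M ≤ JN (N + M) := by
  rw [Ideal.mul_le]
  intro f hf g hg
  constructor
  · intro i hi
    rw [PowerSeries.coeff_mul]
    refine Finset.sum_eq_zero fun p hp => ?_
    have hpq : p.1 + p.2 = i := Finset.HasAntidiagonal.mem_antidiagonal.mp hp
    by_cases h : p.1 < N
    · rw [hf.1 p.1 h, zero_mul]
    · rw [hg.1 p.2 (by omega), mul_zero]
  · intro i
    rw [PowerSeries.coeff_mul, pow_add]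
    exact sum_mem fun p _ => Ideal.mul_mem_mul (hf.2 p.1) (hg.2 p.2)

lemma derivedSub_mono {G : Type*} [Group G] {H K : Subgroup G} (h : H ≤ K) (k : ℕ) :
    derivedSub H k ≤ derivedSub K k := by
  induction k with
  | zero => exact h
  | succ n ih => exact Subgroup.commutator_mono ih ih

lemma derivedSub_succ_le {G : Type*} [Group G] (H : Subgroup G) (k : ℕ) :
    derivedSub H (k + 1) ≤ derivedSub H k := by
  induction k with
  | zero =>
    rw [show derivedSub H 1 = ⁅derivedSub H 0, derivedSub H 0⁆ from rfl, Subgroup.commutator_le]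
    intro g hg h hh
    rw [commutatorElement_def]
    exact mul_mem (mul_mem (mul_mem hg hh) (inv_mem hg)) (inv_mem hh)
  | succ n ih => exact Subgroup.commutator_mono ih ih

lemma derivedSub_le_of_le {G : Type*} [Group G] (H : Subgroup G) {j k : ℕ} (h : j ≤ k) :
    derivedSub H k ≤ derivedSub H j := by
  induction k with
  | zero => simp_all
  | succ n ih =>
    rcases Nat.lt_or_ge j (n+1) with h' | h'
    · exact le_trans (derivedSub_succ_le H n) (ih (by omega))
    · have : j = n + 1 := by omega
      subst this; exact le_rfl

lemma derivedSub_map {G G' : Type*} [Group G] [Group G'] (f : G →* G') (H : Subgroup G) (k : ℕ) :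
    Subgroup.map f (derivedSub H k) = derivedSub (Subgroup.map f H) k := by
  induction k with
  | zero => rfl
  | succ n ih =>
    show Subgroup.map f ⁅derivedSub H n, derivedSub H n⁆ = _
    rw [Subgroup.map_commutator, ih]; rfl

/-- The ideal of power series all of whose coefficients lie in `Σ`. -/
def Lker : Ideal PS := RingHom.ker (PowerSeries.map aug)

/-- The ideal of power series with vanishing constant coefficient. -/
def C0 : Ideal PS := RingHom.ker (PowerSeries.constantCoeff (R := R2))

/-- `RT → ℤ[[X]]`: expansion followed by augmentation. -/
def rpsi : RT →+* PowerSeries ℤ := (PowerSeries.map aug).comp phi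

def Psi : MatRTˣ →* (Matrix (Fin 2) (Fin 2) (PowerSeries ℤ))ˣ :=
  Units.map (RingHom.mapMatrix rpsi).toMonoidHom

lemma rpsi_one_sub_Yt : rpsi (1 - Yt) = 0 := by
  rw [rpsi, RingHom.comp_apply, map_sub, _root_.map_one, Yt, phi_C, map_sub, _root_.map_one,
    PowerSeries.map_C, aug_Yr, map_one (PowerSeries.C (R := ℤ)), sub_self]

lemma rpsi_Xt : rpsi Xt = 1 := by
  rw [rpsi, RingHom.comp_apply, Xt, phi_C, PowerSeries.map_C, aug_Xr, map_one (PowerSeries.C (R := ℤ))]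

lemma Psi_m1 (m1 : MatRTˣ) (h1 : (m1 : MatRT) = M1T) : Psi m1 = 1 := by
  apply Units.ext
  rw [Psi, Units.coe_map, Units.val_one, RingHom.toMonoidHom_eq_coe, MonoidHom.coe_coe, h1]
  show RingHom.mapMatrix rpsi M1T = 1
  rw [RingHom.mapMatrix_apply, M1T]
  ext a b
  fin_cases a <;> fin_cases b <;>
    simp [Matrix.map_apply, rpsi_one_sub_Yt, rpsi_Xt, Matrix.one_apply]

lemma Psi_derived_one (m1 m2t : MatRTˣ) (h1 : (m1 : MatRT) = M1T)
    (g : MatRTˣ) (hg : g ∈ derivedSub (Subgroup.closure {m1, m2t}) 1) :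
    Psi g = 1 := by
  set w := Psi m2t with hw
  have hmap : Subgroup.map Psi (Subgroup.closure {m1, m2t}) ≤ Subgroup.zpowers w := by
    rw [MonoidHom.map_closure, Set.image_pair, Psi_m1 m1 h1]
    rw [Subgroup.closure_le]
    rintro z (rfl | rfl)
    · exact Subgroup.one_mem _
    · exact Subgroup.mem_zpowers w
  have hPsig : Psi g ∈ Subgroup.map Psi (derivedSub (Subgroup.closure {m1, m2t}) 1) :=
    Subgroup.mem_map_of_mem Psi hg
  rw [derivedSub_map] at hPsig
  have : derivedSub (Subgroup.map Psi (Subgroup.closure {m1, m2t})) 1 ≤ ⊥ := by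
    refine le_trans (derivedSub_mono hmap 1) ?_
    show ⁅Subgroup.zpowers w, Subgroup.zpowers w⁆ ≤ ⊥
    rw [Subgroup.commutator_le]
    intro a ha b hb
    obtain ⟨i, rfl⟩ := Subgroup.mem_zpowers_iff.mp ha
    obtain ⟨j, rfl⟩ := Subgroup.mem_zpowers_iff.mp hb
    rw [Subgroup.mem_bot, commutatorElement_eq_one_iff_commute]
    exact Commute.zpow_zpow (Commute.refl w) i j
  simpa [Subgroup.mem_bot] using this hPsig

lemma derived_one_le_HJ_Lker (m1 m2t : MatRTˣ) (h1 : (m1 : MatRT) = M1T) :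
    derivedSub (Subgroup.closure {m1, m2t}) 1 ≤ HJ Lker := by
  intro g hg
  have hPsi := Psi_derived_one m1 m2t h1 g hg
  have hcoe : RingHom.mapMatrix rpsi (g : MatRT) = 1 := by
    have := congrArg (Units.val) hPsi
    rwa [Psi, Units.coe_map, Units.val_one] at this
  rw [mem_HJ]
  intro a b
  show _ ∈ RingHom.ker (PowerSeries.map aug)
  rw [RingHom.mem_ker]
  have h2 : PowerSeries.map aug ((Phi (↑g : MatRT)) a b) = (1 : Matrix (Fin 2) (Fin 2) (PowerSeries ℤ)) a b := by
    have : PowerSeries.map aug ((Phi (↑g : MatRT)) a b) = (RingHom.mapMatrix rpsi (g : MatRT)) a b := rfl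
    rw [this, hcoe]
  rw [Matrix.sub_apply, map_sub, h2]
  rcases eq_or_ne a b with rfl | hab
  · simp [Matrix.one_apply_eq]
  · simp [Matrix.one_apply_ne hab]

/-- Evaluation `t ↦ 1 : RT → ℛ`. -/
def ev1 : RT →+* R2 := (PowerSeries.constantCoeff (R := R2)).comp phi

def Pim : MatRTˣ →* (Matrix (Fin 2) (Fin 2) R2)ˣ :=
  Units.map (RingHom.mapMatrix ev1).toMonoidHom

lemma ev1_C (r : R2) : ev1 (LaurentPolynomial.C r) = r := by
  rw [ev1, RingHom.comp_apply, phi_C, PowerSeries.constantCoeff_C]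

lemma ev1_tL : ev1 tL = 1 := by
  rw [ev1, RingHom.comp_apply, phi_T, map_add, _root_.map_one, PowerSeries.constantCoeff_X,
    add_zero]

lemma Pim_m1 (m1 : MatRTˣ) (h1 : (m1 : MatRT) = M1T) :
    (Pim m1 : Matrix (Fin 2) (Fin 2) R2) = M1 := by
  rw [Pim, Units.coe_map, RingHom.toMonoidHom_eq_coe, MonoidHom.coe_coe, h1]
  show RingHom.mapMatrix ev1 M1T = M1
  rw [RingHom.mapMatrix_apply, M1T, M1]
  ext a b
  fin_cases a <;> fin_cases b <;>
    simp [Matrix.map_apply, Xt, Yt, ev1_C, map_sub, _root_.map_one]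

lemma Pim_m2t (m2t : MatRTˣ) (h2 : (m2t : MatRT) = M2T * Tm) :
    (Pim m2t : Matrix (Fin 2) (Fin 2) R2) = M2 := by
  rw [Pim, Units.coe_map, RingHom.toMonoidHom_eq_coe, MonoidHom.coe_coe, h2]
  show RingHom.mapMatrix ev1 (M2T * Tm) = M2
  rw [_root_.map_mul]
  have hM2 : RingHom.mapMatrix ev1 M2T = M2 := by
    rw [RingHom.mapMatrix_apply, M2T, M2]
    ext a b
    fin_cases a <;> fin_cases b <;>
      simp [Matrix.map_apply, Xt, Yt, ev1_C, map_sub, _root_.map_one]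
  have hTm : RingHom.mapMatrix ev1 Tm = 1 := by
    rw [RingHom.mapMatrix_apply, Tm]
    ext a b
    fin_cases a <;> fin_cases b <;>
      simp [Matrix.map_apply, ev1_tL, map_sub, _root_.map_one, Matrix.one_apply]
  rw [hM2, hTm, mul_one]

/-- The column vector `u₀ = (1-y, -(1-x))`. -/
def u0 : Fin 2 → R2 := ![1 - Yr, -(1 - Xr)]

abbrev MatR := Matrix (Fin 2) (Fin 2) R2

/-- The subgroup fixing `v` on the left and scaling `u₀` on the right. -/
def G1 : Subgroup MatRˣ where
  carrier := {C | vv ᵥ* (C : MatR) = vv ∧ ∃ r : R2ˣ, (C : MatR) *ᵥ u0 = (r : R2) • u0}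
  one_mem' := ⟨by simp, 1, by simp⟩
  mul_mem' := by
    rintro C C' ⟨hv, r, hr⟩ ⟨hv', r', hr'⟩
    refine ⟨?_, r * r', ?_⟩
    · rw [Units.val_mul, ← Matrix.vecMul_vecMul, hv, hv']
    · rw [Units.val_mul, ← Matrix.mulVec_mulVec, hr', Matrix.mulVec_smul, hr,
        smul_smul, Units.val_mul, mul_comm (r:R2) (r':R2)]
  inv_mem' := by
    rintro C ⟨hv, r, hr⟩
    constructor
    · have : vv ᵥ* ((C : MatR) * (↑C⁻¹ : MatR)) = vv := by
        rw [Units.mul_inv, Matrix.vecMul_one]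
      rw [← Matrix.vecMul_vecMul, hv] at this
      exact this
    · refine ⟨r⁻¹, ?_⟩
      have h1 : (↑C⁻¹ : MatR) *ᵥ ((C : MatR) *ᵥ u0) = u0 := by
        rw [Matrix.mulVec_mulVec, Units.inv_mul, Matrix.one_mulVec]
      rw [hr, Matrix.mulVec_smul] at h1
      calc (↑C⁻¹ : MatR) *ᵥ u0 = ((r⁻¹ : R2ˣ) : R2) • ((r:R2) • ((↑C⁻¹ : MatR) *ᵥ u0)) := by
            rw [smul_smul, ← Units.val_mul, inv_mul_cancel, Units.val_one, one_smul]
        _ = ((r⁻¹ : R2ˣ) : R2) • u0 := by rw [h1]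

/-- The subgroup fixing both `v` and `u₀`. -/
def GG : Subgroup MatRˣ where
  carrier := {C | vv ᵥ* (C : MatR) = vv ∧ (C : MatR) *ᵥ u0 = u0}
  one_mem' := ⟨by simp, by simp⟩
  mul_mem' := by
    rintro C C' ⟨hv, hr⟩ ⟨hv', hr'⟩
    exact ⟨by rw [Units.val_mul, ← Matrix.vecMul_vecMul, hv, hv'],
      by rw [Units.val_mul, ← Matrix.mulVec_mulVec, hr', hr]⟩
  inv_mem' := by
    rintro C ⟨hv, hr⟩
    constructor
    · have : vv ᵥ* ((C : MatR) * (↑C⁻¹ : MatR)) = vv := by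
        rw [Units.mul_inv, Matrix.vecMul_one]
      rw [← Matrix.vecMul_vecMul, hv] at this
      exact this
    · have h1 : (↑C⁻¹ : MatR) *ᵥ ((C : MatR) *ᵥ u0) = u0 := by
        rw [Matrix.mulVec_mulVec, Units.inv_mul, Matrix.one_mulVec]
      rw [hr] at h1
      exact h1

lemma commutator_G1_le : ⁅G1, G1⁆ ≤ GG := by
  rw [Subgroup.commutator_le]
  rintro C ⟨hv, r, hr⟩ C' ⟨hv', r', hr'⟩
  have hCinv : vv ᵥ* (↑C⁻¹ : MatR) = vv := by
    have : vv ᵥ* ((C : MatR) * (↑C⁻¹ : MatR)) = vv := by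
      rw [Units.mul_inv, Matrix.vecMul_one]
    rwa [← Matrix.vecMul_vecMul, hv] at this
  have hC'inv : vv ᵥ* (↑C'⁻¹ : MatR) = vv := by
    have : vv ᵥ* ((C' : MatR) * (↑C'⁻¹ : MatR)) = vv := by
      rw [Units.mul_inv, Matrix.vecMul_one]
    rwa [← Matrix.vecMul_vecMul, hv'] at this
  have hrinv : (↑C⁻¹ : MatR) *ᵥ u0 = ((r⁻¹ : R2ˣ) : R2) • u0 := by
    have h1 : (↑C⁻¹ : MatR) *ᵥ ((C : MatR) *ᵥ u0) = u0 := by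
      rw [Matrix.mulVec_mulVec, Units.inv_mul, Matrix.one_mulVec]
    rw [hr, Matrix.mulVec_smul] at h1
    calc (↑C⁻¹ : MatR) *ᵥ u0 = ((r⁻¹ : R2ˣ) : R2) • ((r:R2) • ((↑C⁻¹ : MatR) *ᵥ u0)) := by
          rw [smul_smul, ← Units.val_mul, inv_mul_cancel, Units.val_one, one_smul]
      _ = ((r⁻¹ : R2ˣ) : R2) • u0 := by rw [h1]
  have hr'inv : (↑C'⁻¹ : MatR) *ᵥ u0 = ((r'⁻¹ : R2ˣ) : R2) • u0 := by
    have h1 : (↑C'⁻¹ : MatR) *ᵥ ((C' : MatR) *ᵥ u0) = u0 := by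
      rw [Matrix.mulVec_mulVec, Units.inv_mul, Matrix.one_mulVec]
    rw [hr', Matrix.mulVec_smul] at h1
    calc (↑C'⁻¹ : MatR) *ᵥ u0 = ((r'⁻¹ : R2ˣ) : R2) • ((r':R2) • ((↑C'⁻¹ : MatR) *ᵥ u0)) := by
          rw [smul_smul, ← Units.val_mul, inv_mul_cancel, Units.val_one, one_smul]
      _ = ((r'⁻¹ : R2ˣ) : R2) • u0 := by rw [h1]
  constructor
  · rw [commutatorElement_def, Units.val_mul, Units.val_mul, Units.val_mul]
    rw [← Matrix.vecMul_vecMul, ← Matrix.vecMul_vecMul, ← Matrix.vecMul_vecMul, hv, hv', hCinv,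
      hC'inv]
  · rw [commutatorElement_def, Units.val_mul, Units.val_mul, Units.val_mul,
      ← Matrix.mulVec_mulVec, ← Matrix.mulVec_mulVec, ← Matrix.mulVec_mulVec, hr'inv]
    simp only [Matrix.mulVec_smul, hrinv, hr', hr, smul_smul]
    rw [← Units.val_mul, ← Units.val_mul, ← Units.val_mul]
    have : r'⁻¹ * r⁻¹ * r' * r = 1 := by
      rw [mul_right_comm r'⁻¹ r⁻¹ r', inv_mul_cancel, one_mul, inv_mul_cancel]
    rw [this, Units.val_one, one_smul]

lemma vecMul_eq (M : MatR) (j : Fin 2) :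
    (vv ᵥ* M) j = vv 0 * M 0 j + vv 1 * M 1 j := by
  simp [Matrix.vecMul, dotProduct, Fin.sum_univ_two]

lemma mulVec_eq (M : MatR) (i : Fin 2) :
    (M *ᵥ u0) i = M i 0 * u0 0 + M i 1 * u0 1 := by
  simp [Matrix.mulVec, dotProduct, Fin.sum_univ_two]

lemma GG_commute {C C' : MatRˣ} (hC : C ∈ GG) (hC' : C' ∈ GG) : Commute C C' := by
  obtain ⟨hv, hu⟩ := hC
  obtain ⟨hv', hu'⟩ := hC'
  set a : R2 := 1 - Xr with ha
  set b : R2 := 1 - Yr with hb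
  have hane : a ≠ 0 := one_sub_Xr_ne
  have hbne : b ≠ 0 := one_sub_Yr_ne
  set M : MatR := (C : MatR) with hM
  set M' : MatR := (C' : MatR) with hM'
  -- the four relations for M
  have e0 : a * (M 0 0 - 1) = -(b * M 1 0) := by
    have := congrFun hv 0
    rw [vecMul_eq] at this
    simp only [vv] at this
    simp only [Matrix.cons_val_zero, Matrix.cons_val_one, Matrix.head_cons] at this
    linear_combination this
  have e1 : a * M 0 1 = -(b * (M 1 1 - 1)) := by
    have := congrFun hv 1
    rw [vecMul_eq] at this
    simp only [vv, Matrix.cons_val_zero, Matrix.cons_val_one, Matrix.head_cons] at this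
    linear_combination this
  have e2 : b * (M 0 0 - 1) = a * M 0 1 := by
    have := congrFun hu 0
    rw [mulVec_eq] at this
    simp only [u0, Matrix.cons_val_zero, Matrix.cons_val_one, Matrix.head_cons] at this
    linear_combination this
  have e3 : b * M 1 0 = a * (M 1 1 - 1) := by
    have := congrFun hu 1
    rw [mulVec_eq] at this
    simp only [u0, Matrix.cons_val_zero, Matrix.cons_val_one, Matrix.head_cons] at this
    linear_combination this
  have f0 : a * (M' 0 0 - 1) = -(b * M' 1 0) := by
    have := congrFun hv' 0
    rw [vecMul_eq] at this
    simp only [vv, Matrix.cons_val_zero, Matrix.cons_val_one, Matrix.head_cons] at this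
    linear_combination this
  have f1 : a * M' 0 1 = -(b * (M' 1 1 - 1)) := by
    have := congrFun hv' 1
    rw [vecMul_eq] at this
    simp only [vv, Matrix.cons_val_zero, Matrix.cons_val_one, Matrix.head_cons] at this
    linear_combination this
  have f2 : b * (M' 0 0 - 1) = a * M' 0 1 := by
    have := congrFun hu' 0
    rw [mulVec_eq] at this
    simp only [u0, Matrix.cons_val_zero, Matrix.cons_val_one, Matrix.head_cons] at this
    linear_combination this
  have f3 : b * M' 1 0 = a * (M' 1 1 - 1) := by
    have := congrFun hu' 1
    rw [mulVec_eq] at this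
    simp only [u0, Matrix.cons_val_zero, Matrix.cons_val_one, Matrix.head_cons] at this
    linear_combination this
  -- product identities
  have hC01 : M 0 1 * M' 1 0 = M' 0 1 * M 1 0 := by
    apply mul_left_cancel₀ hbne
    linear_combination M 0 1 * f3 + (M' 1 1 - 1) * e1 - M' 0 1 * e3 - (M 1 1 - 1) * f1
  have hD : (M 1 1 - 1) * M' 1 0 = (M' 1 1 - 1) * M 1 0 := by
    apply mul_left_cancel₀ hbne
    linear_combination (M 1 1 - 1) * f3 - (M' 1 1 - 1) * e3
  have hE : (M 0 0 - 1) * M' 0 1 = (M' 0 0 - 1) * M 0 1 := by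
    apply mul_left_cancel₀ hbne
    linear_combination M' 0 1 * e2 - M 0 1 * f2
  have hF : M 0 1 * (M' 1 1 - 1) = M' 0 1 * (M 1 1 - 1) := by
    apply mul_left_cancel₀ hane
    linear_combination (M' 1 1 - 1) * e1 - (M 1 1 - 1) * f1
  have hI : M 1 0 * (M' 0 0 - 1) = M' 1 0 * (M 0 0 - 1) := by
    apply mul_left_cancel₀ hane
    linear_combination M 1 0 * f0 - M' 1 0 * e0
  have hMlem : M 1 0 * M' 0 1 = M' 1 0 * M 0 1 := by
    apply mul_left_cancel₀ hbne
    linear_combination M' 0 1 * e3 - M 0 1 * f3 - a * hF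
  -- conclude
  have : M * M' = M' * M := by
    refine Matrix.ext fun i j => ?_
    rw [Matrix.mul_apply, Matrix.mul_apply, Fin.sum_univ_two, Fin.sum_univ_two]
    fin_cases i <;> fin_cases j <;> simp only [Fin.mk_zero, Fin.mk_one]
    · linear_combination hC01
    · linear_combination hE + hF
    · linear_combination hI + hD
    · linear_combination hMlem
  exact Units.ext (by rw [Units.val_mul, Units.val_mul, ← hM, ← hM', this])

lemma M1_mem_cond : vv ᵥ* M1 = vv ∧ M1 *ᵥ u0 = Xr • u0 := by
  constructor
  · funext j
    rw [vecMul_eq]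
    fin_cases j <;>
      simp [M1, vv, Matrix.cons_val_zero, Matrix.cons_val_one, Matrix.head_cons] <;> ring
  · funext i
    rw [mulVec_eq]
    fin_cases i <;>
      simp [M1, u0, Matrix.cons_val_zero, Matrix.cons_val_one, Matrix.head_cons] <;> ring

lemma M2_mem_cond : vv ᵥ* M2 = vv ∧ M2 *ᵥ u0 = Yr • u0 := by
  constructor
  · funext j
    rw [vecMul_eq]
    fin_cases j <;>
      simp [M2, vv, Matrix.cons_val_zero, Matrix.cons_val_one, Matrix.head_cons] <;> ring
  · funext i
    rw [mulVec_eq]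
    fin_cases i <;>
      simp [M2, u0, Matrix.cons_val_zero, Matrix.cons_val_one, Matrix.head_cons] <;> ring

lemma Pim_derived_two (m1 m2t : MatRTˣ) (h1 : (m1 : MatRT) = M1T)
    (h2 : (m2t : MatRT) = M2T * Tm)
    (g : MatRTˣ) (hg : g ∈ derivedSub (Subgroup.closure {m1, m2t}) 2) :
    Pim g = 1 := by
  have hmap : Subgroup.map Pim (Subgroup.closure {m1, m2t}) ≤ G1 := by
    rw [MonoidHom.map_closure, Set.image_pair, Subgroup.closure_le]
    rintro z (rfl | rfl)
    · show Pim m1 ∈ G1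
      refine ⟨?_, xu, ?_⟩ <;> rw [Pim_m1 m1 h1]
      · exact M1_mem_cond.1
      · exact M1_mem_cond.2
    · show Pim m2t ∈ G1
      refine ⟨?_, yu, ?_⟩ <;> rw [Pim_m2t m2t h2]
      · exact M2_mem_cond.1
      · exact M2_mem_cond.2
  have hPg : Pim g ∈ Subgroup.map Pim (derivedSub (Subgroup.closure {m1, m2t}) 2) :=
    Subgroup.mem_map_of_mem Pim hg
  rw [derivedSub_map] at hPg
  have hle : derivedSub (Subgroup.map Pim (Subgroup.closure {m1, m2t})) 2 ≤ ⊥ := by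
    refine le_trans (derivedSub_mono hmap 2) ?_
    show ⁅⁅G1, G1⁆, ⁅G1, G1⁆⁆ ≤ ⊥
    refine le_trans (Subgroup.commutator_mono commutator_G1_le commutator_G1_le) ?_
    rw [Subgroup.commutator_le]
    intro c hc c' hc'
    rw [Subgroup.mem_bot, commutatorElement_eq_one_iff_commute]
    exact GG_commute hc hc'
  simpa [Subgroup.mem_bot] using hle hPg

lemma derived_two_le_HJ_C0 (m1 m2t : MatRTˣ) (h1 : (m1 : MatRT) = M1T)
    (h2 : (m2t : MatRT) = M2T * Tm) :
    derivedSub (Subgroup.closure {m1, m2t}) 2 ≤ HJ C0 := by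
  intro g hg
  have hP := Pim_derived_two m1 m2t h1 h2 g hg
  have hcoe : RingHom.mapMatrix ev1 (g : MatRT) = 1 := by
    have := congrArg (Units.val) hP
    rwa [Pim, Units.coe_map, Units.val_one] at this
  rw [mem_HJ]
  intro a b
  show _ ∈ RingHom.ker (PowerSeries.constantCoeff (R := R2))
  rw [RingHom.mem_ker]
  have h3 : PowerSeries.constantCoeff (R := R2) ((Phi (↑g : MatRT)) a b)
      = (1 : Matrix (Fin 2) (Fin 2) R2) a b := by
    have : PowerSeries.constantCoeff (R := R2) ((Phi (↑g : MatRT)) a b)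
        = (RingHom.mapMatrix ev1 (g : MatRT)) a b := rfl
    rw [this, hcoe]
  rw [Matrix.sub_apply, map_sub, h3]
  rcases eq_or_ne a b with rfl | hab
  · simp [Matrix.one_apply_eq]
  · simp [Matrix.one_apply_ne hab]

lemma Lker_inf_C0_le_JN1 : Lker ⊓ C0 ≤ JN 1 := by
  rintro f ⟨hL, hC⟩
  rw [mem_JN]
  constructor
  · intro i hi
    interval_cases i
    have : PowerSeries.constantCoeff (R := R2) f = 0 := hC
    rwa [← PowerSeries.coeff_zero_eq_constantCoeff_apply] at this
  · intro i
    rw [pow_one, Saug, RingHom.mem_ker]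
    have : PowerSeries.map aug f = 0 := hL
    have := congrArg (PowerSeries.coeff (R := ℤ) i) this
    rwa [PowerSeries.coeff_map, map_zero] at this

lemma main_induction (m1 m2t : MatRTˣ) (h1 : (m1 : MatRT) = M1T)
    (h2 : (m2t : MatRT) = M2T * Tm) :
    ∀ k : ℕ, 2 ≤ k → derivedSub (Subgroup.closure {m1, m2t}) k ≤ HJ (JN (2 ^ (k - 2))) := by
  intro k hk
  induction k, hk using Nat.le_induction with
  | base =>
    intro g hg
    refine HJ_mono Lker_inf_C0_le_JN1 ?_
    have hL : g ∈ HJ Lker :=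
      derived_one_le_HJ_Lker m1 m2t h1
        (derivedSub_le_of_le (Subgroup.closure {m1, m2t}) (by norm_num) hg)
    have hC : g ∈ HJ C0 := derived_two_le_HJ_C0 m1 m2t h1 h2 hg
    exact fun a b => ⟨hL a b, hC a b⟩
  | succ n hn ih =>
    have hstep : derivedSub (Subgroup.closure {m1, m2t}) (n + 1)
        ≤ HJ (JN (2 ^ (n - 2)) * JN (2 ^ (n - 2))) := by
      show ⁅derivedSub (Subgroup.closure {m1, m2t}) n,
        derivedSub (Subgroup.closure {m1, m2t}) n⁆ ≤ _
      exact le_trans (Subgroup.commutator_mono ih ih) (commutator_HJ_le _ _)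
    refine le_trans hstep (HJ_mono ?_)
    refine le_trans (JN_mul_le _ _) ?_
    have : 2 ^ (n + 1 - 2) = 2 ^ (n - 2) + 2 ^ (n - 2) := by
      have hn2 : n + 1 - 2 = (n - 2) + 1 := by omega
      rw [hn2, pow_succ]
      ring
    rw [this]

lemma coeff_one_entry (i : ℕ) (a b : Fin 2) :
    PowerSeries.coeff (R := R2) i ((1 : MatPS) a b)
      = if i = 0 then (1 : Matrix (Fin 2) (Fin 2) R2) a b else 0 := by
  rcases eq_or_ne a b with rfl | hab
  · rw [Matrix.one_apply_eq, Matrix.one_apply_eq, PowerSeries.coeff_one]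
  · rw [Matrix.one_apply_ne hab, Matrix.one_apply_ne hab, map_zero]; simp

end

/-- If `g ∈ F⁽ᵏ⁾`, the `k`-th derived group of `F(ℛ[t, t⁻¹]) = ⟨M₁, M₂T⟩` (`k ≥ 2`), and
`g = M_g + (t-1)A₁ + (t-1)²A₂ + ⋯` is its expansion in powers of `t - 1`, then `M_g = I`,
`Aᵢ = 0` for `i < 2^(k-2)`, and `Aᵢ ∈ Σ^(2^(k-2))` entrywise for all `i ≥ 2^(k-2)`. -/
theorem derived_series_coefficients
    (m1 m2t : (Matrix (Fin 2) (Fin 2) RT)ˣ)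
    (h1 : (m1 : Matrix (Fin 2) (Fin 2) RT) = M1T)
    (h2 : (m2t : Matrix (Fin 2) (Fin 2) RT) = M2T * Tm)
    (k : ℕ) (hk : 2 ≤ k)
    (g : (Matrix (Fin 2) (Fin 2) RT)ˣ)
    (hg : g ∈ derivedSub (Subgroup.closure {m1, m2t}) k) :
    (∀ a b : Fin 2,
        PowerSeries.coeff (R := R2) 0 (phi ((g : Matrix (Fin 2) (Fin 2) RT) a b)) =
          (1 : Matrix (Fin 2) (Fin 2) R2) a b) ∧
    (∀ i : ℕ, 1 ≤ i → i < 2 ^ (k - 2) → ∀ a b : Fin 2,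
        PowerSeries.coeff (R := R2) i (phi ((g : Matrix (Fin 2) (Fin 2) RT) a b)) = 0) ∧
    (∀ i : ℕ, 2 ^ (k - 2) ≤ i → ∀ a b : Fin 2,
        PowerSeries.coeff (R := R2) i (phi ((g : Matrix (Fin 2) (Fin 2) RT) a b)) ∈
          Saug ^ (2 ^ (k - 2))) := by

  have hmem := main_induction m1 m2t h1 h2 k hk hg
  have hN1 : 1 ≤ 2 ^ (k - 2) := Nat.one_le_two_pow
  have key : ∀ (a b : Fin 2) (i : ℕ),
      PowerSeries.coeff (R := R2) i (phi ((g : MatRT) a b))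
        = PowerSeries.coeff (R := R2) i ((Phi (↑g : MatRT) - 1) a b)
          + PowerSeries.coeff (R := R2) i ((1 : MatPS) a b) := by
    intro a b i
    rw [Matrix.sub_apply, map_sub, Phi_apply]
    ring
  refine ⟨?_, ?_, ?_⟩
  · intro a b
    rw [key, (hmem a b).1 0 (by omega), coeff_one_entry, if_pos rfl, zero_add]
  · intro i hi1 hi2 a b
    rw [key, (hmem a b).1 i hi2, coeff_one_entry, if_neg (by omega), zero_add]
  · intro i hi a b
    rw [key, coeff_one_entry, if_neg (by omega), add_zero]
    exact (hmem a b).2 i
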